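/- Let X be a completely regular Hausdorff (Tychonoff) topological space and F a real Banach space. If A ⊆ C(X) is such that the linear span of A is dense in C(X) with the compact-open topology, then the linear span of { g ⊗ f : g ∈ A, f ∈ F } is dense in C(X, F) with the compact-open topology. -/

import Mathlib

open Topology Set

/-- Closure criterion in `C(X, F)` with the compact-open (compact convergence) topology. -/
private lemma memClosureCpt {X : Type*} [TopologicalSpace X] {F : Type*} [NormedAddCommGroup F]
    (S : Set C(X, F)) (h : C(X, F)) :
    h ∈ closure S ↔ ∀ K : Set X, IsCompact K → ∀ ε : ℝ, 0 < ε →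
      ∃ s ∈ S, ∀ x ∈ K, dist (s x) (h x) < ε := by
  have B2 := (Metric.uniformity_basis_dist (α := F)).compactConvergenceUniformity (α := X)
  rw [mem_closure_iff_nhds_basis (nhds_basis_uniformity' B2)]
  constructor
  · intro H K hK ε hε
    obtain ⟨s, hsS, hs⟩ := H (K, ε) ⟨hK, hε⟩
    exact ⟨s, hsS, fun x hx => by simpa [dist_comm] using hs x hx⟩
  · intro H p hp
    obtain ⟨s, hsS, hs⟩ := H p.1 hp.1 p.2 hp.2
    exact ⟨s, hsS, fun x hx => by simpa [dist_comm] using hs x hx⟩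

theorem stmt_8 (X : Type*) [TopologicalSpace X] [T35Space X]
    (F : Type*) [NormedAddCommGroup F] [NormedSpace ℝ F] [CompleteSpace F]
    (A : Set C(X, ℝ))
    (hA : Dense (↑(Submodule.span ℝ A) : Set C(X, ℝ))) :
    Dense (↑(Submodule.span ℝ
        {h : C(X, F) | ∃ g ∈ A, ∃ f : F, ∀ x : X, h x = g x • f}) : Set C(X, F)) := by
  set S : Submodule ℝ C(X, F) :=
    Submodule.span ℝ {h : C(X, F) | ∃ g ∈ A, ∃ f : F, ∀ x : X, h x = g x • f} with hSdef
  -- Step A: for any `g : C(X, ℝ)` and `f : F`, the map `x ↦ g x • f` lies in `closure S`.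
  have stepA : ∀ (g : C(X, ℝ)) (f : F),
      (⟨fun x => g x • f, (map_continuous g).smul continuous_const⟩ : C(X, F)) ∈
        closure (S : Set C(X, F)) := by
    intro g f
    let L : C(ℝ, F) := ⟨fun r => r • f, continuous_id.smul continuous_const⟩
    let T : C(X, ℝ) → C(X, F) := fun g' => L.comp g'
    have hT : Continuous T := ContinuousMap.continuous_postcomp L
    have hmaps : ∀ g' ∈ (Submodule.span ℝ A : Set C(X, ℝ)), T g' ∈ S := by
      intro g' hg'
      induction hg' using Submodule.span_induction with
      | mem x hx => exact Submodule.subset_span ⟨x, hx, f, fun y => rfl⟩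
      | zero =>
          have : T 0 = 0 := by ext y; simp [T, L]
          rw [this]; exact S.zero_mem
      | add a b _ _ ha hb =>
          have : T (a + b) = T a + T b := by ext y; simp [T, L, add_smul]
          rw [this]; exact S.add_mem ha hb
      | smul r a _ ha =>
          have : T (r • a) = r • T a := by ext y; simp [T, L, mul_smul]
          rw [this]; exact S.smul_mem r ha
    have hg : g ∈ closure (Submodule.span ℝ A : Set C(X, ℝ)) := hA g
    have h1 : T g ∈ closure (T '' (Submodule.span ℝ A : Set C(X, ℝ))) :=
      image_closure_subset_closure_image hT ⟨g, hg, rfl⟩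
    exact closure_mono (by rintro _ ⟨g', hg', rfl⟩; exact hmaps g' hg') h1
  rw [dense_iff_closure_eq, eq_univ_iff_forall]
  intro h
  rw [memClosureCpt]
  intro K hK ε hε
  -- bump functions
  have bump : ∀ x : X, ∃ φ : C(X, ℝ), φ x = 1 ∧ (∀ y, 0 ≤ φ y ∧ φ y ≤ 1) ∧
      ∀ y, ε / 4 ≤ dist (h y) (h x) → φ y = 0 := by
    intro x
    have hCl : IsClosed {y : X | ε / 4 ≤ dist (h y) (h x)} :=
      isClosed_le continuous_const ((map_continuous h).dist continuous_const)
    have hx : x ∉ {y : X | ε / 4 ≤ dist (h y) (h x)} := by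
      simp only [Set.mem_setOf_eq, dist_self, not_le]
      linarith
    obtain ⟨f0, hf0c, hf0x, hf0K⟩ :=
      CompletelyRegularSpace.completely_regular x _ hCl hx
    refine ⟨⟨fun y => 1 - (f0 y : ℝ), by fun_prop⟩, ?_, ?_, ?_⟩
    · simp [hf0x]
    · intro y
      refine ⟨by simpa using (f0 y).2.2, ?_⟩
      have := (f0 y).2.1; simp; linarith
    · intro y hy
      have : f0 y = 1 := hf0K hy
      simp [this]
  choose φ hφx hφ01 hφ0 using bump
  let V : X → Set X := fun x => {y | 1 / 2 < φ x y}
  have hVopen : ∀ x, IsOpen (V x) := fun x => isOpen_lt continuous_const (map_continuous (φ x))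
  obtain ⟨t, ht⟩ := hK.elim_finite_subcover V hVopen
    (fun y _ => Set.mem_iUnion.2 ⟨y, by simp only [V, Set.mem_setOf_eq, hφx y]; norm_num⟩)
  let ψ : C(X, ℝ) := ∑ i ∈ t, φ i
  have hψ : ∀ y, ψ y = ∑ i ∈ t, φ i y := by intro y; simp [ψ]
  have hψK : ∀ y ∈ K, 1 / 2 < ψ y := by
    intro y hy
    obtain ⟨i, hi⟩ := Set.mem_iUnion₂.1 (ht hy)
    obtain ⟨hit, hiy⟩ := hi
    calc (1 : ℝ) / 2 < φ i y := hiy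
      _ ≤ ψ y := by
          rw [hψ]
          exact Finset.single_le_sum (fun j _ => (hφ01 j y).1) hit
  let d : C(X, ℝ) := ⟨fun y => max (ψ y) (1 / 2), (map_continuous ψ).max continuous_const⟩
  have hd : ∀ y, 0 < d y := fun y => lt_of_lt_of_le (by norm_num) (le_max_right _ _)
  have hdK : ∀ y ∈ K, d y = ψ y := fun y hy => max_eq_left (hψK y hy).le
  let g : X → C(X, ℝ) := fun i =>
    ⟨fun y => φ i y / d y, (map_continuous (φ i)).div (map_continuous d) fun y => (hd y).ne'⟩
  have hg0 : ∀ i y, 0 ≤ g i y := fun i y => div_nonneg (hφ01 i y).1 (hd y).le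
  have hgsum : ∀ y ∈ K, ∑ i ∈ t, g i y = 1 := by
    intro y hy
    have h1 : ∑ i ∈ t, φ i y / d y = ψ y / d y := by rw [← Finset.sum_div, ← hψ]
    simp only [g, ContinuousMap.coe_mk]
    rw [h1, hdK y hy, div_self (by linarith [hψK y hy])]
  -- approximate each tensor by an element of S
  set δ : ℝ := ε / (4 * (t.card + 1)) with hδdef
  have hδ : 0 < δ := by positivity
  have happrox : ∀ i : X, ∃ s', s' ∈ (S : Set C(X, F)) ∧
      ∀ x ∈ K, dist (s' x) (g i x • h i) < δ := by
    intro i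
    have := (memClosureCpt (S : Set C(X, F)) _).1 (stepA (g i) (h i)) K hK δ hδ
    obtain ⟨s', hs'S, hs'⟩ := this
    exact ⟨s', hs'S, fun x hx => hs' x hx⟩
  choose sf hsfS hsfd using happrox
  refine ⟨∑ i ∈ t, sf i, Submodule.sum_mem S fun i _ => hsfS i, ?_⟩
  intro y hy
  have hsum_apply : (∑ i ∈ t, sf i) y = ∑ i ∈ t, sf i y := by
    simp
  -- first estimate
  have est1 : dist ((∑ i ∈ t, sf i) y) (∑ i ∈ t, g i y • h i) ≤ ε / 4 := by
    rw [hsum_apply]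
    refine le_trans (dist_sum_sum_le_of_le t fun i _ => (hsfd i y hy).le) ?_
    calc ∑ _i ∈ t, δ = t.card * δ := by rw [Finset.sum_const, nsmul_eq_mul]
      _ ≤ (t.card + 1) * δ := by nlinarith [hδ.le]
      _ = ε / 4 := by rw [hδdef]; field_simp
  -- second estimate
  have est2 : dist (∑ i ∈ t, g i y • h i) (h y) ≤ ε / 4 := by
    rw [dist_eq_norm]
    calc ‖∑ i ∈ t, g i y • h i - h y‖
        = ‖∑ i ∈ t, g i y • (h i - h y)‖ := by
          congr 1
          have hdistr : ∑ i ∈ t, g i y • (h i - h y)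
              = (∑ i ∈ t, g i y • h i) - (∑ i ∈ t, g i y • h y) := by
            simp_rw [smul_sub]
            exact Finset.sum_sub_distrib _ _
          rw [hdistr, ← Finset.sum_smul, hgsum y hy, one_smul]
      _ ≤ ∑ i ∈ t, ‖g i y • (h i - h y)‖ := norm_sum_le _ _
      _ ≤ ∑ i ∈ t, g i y * (ε / 4) := by
          refine Finset.sum_le_sum fun i _ => ?_
          rw [norm_smul, Real.norm_of_nonneg (hg0 i y)]
          by_cases hzero : φ i y = 0
          · have : g i y = 0 := by simp [g, hzero]
            simp [this]
          · have hdist : dist (h y) (h i) < ε / 4 := by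
              by_contra hcon
              exact hzero (hφ0 i y (not_lt.1 hcon))
            have : ‖h i - h y‖ ≤ ε / 4 := by
              rw [← dist_eq_norm, dist_comm]
              exact hdist.le
            exact mul_le_mul_of_nonneg_left this (hg0 i y)
      _ = (∑ i ∈ t, g i y) * (ε / 4) := by rw [Finset.sum_mul]
      _ = ε / 4 := by rw [hgsum y hy, one_mul]
  calc dist ((∑ i ∈ t, sf i) y) (h y)
      ≤ dist ((∑ i ∈ t, sf i) y) (∑ i ∈ t, g i y • h i) + dist (∑ i ∈ t, g i y • h i) (h y) :=
        dist_triangle _ _ _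
    _ ≤ ε / 4 + ε / 4 := add_le_add est1 est2
    _ < ε := by linarith
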